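/- arXiv:2401.04816 — 3 statements merged into one kernel-verified Lean document; each statement's English description precedes it below -/
import Mathlib

section
/- Let T>0, μ≥1, M≥1, λ>0, and define on (0,T): α(t) = (t(T−t))^{-1}(e^{μ} − e^{2μM}), φ(t) = (t(T−t))^{-1} e^{μ}, θ(t) = e^{λα(t)}. If λ ≥ T², then |d/dt (θ(t)² φ(t))| ≤ C T λ θ(t)² φ(t)³ for all t ∈ (0,T), where C is a constant depending only on μ and M. -/
theorem stmt_5 (μ M : ℝ) (hμ : 1 ≤ μ) (hM : 1 ≤ M) :
    ∃ C > (0:ℝ), ∀ T > (0:ℝ), ∀ lam > (0:ℝ), T ^ 2 ≤ lam →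
      ∀ t ∈ Set.Ioo (0:ℝ) T,
        |deriv (fun s : ℝ =>
            (Real.exp (lam * ((Real.exp μ - Real.exp (2 * μ * M)) / (s * (T - s))))) ^ 2 *
              (Real.exp μ / (s * (T - s)))) t|
          ≤ C * T * lam *
              (Real.exp (lam * ((Real.exp μ - Real.exp (2 * μ * M)) / (t * (T - t))))) ^ 2 *
              (Real.exp μ / (t * (T - t))) ^ 3 := by
  have hμM : μ ≤ μ * M := by nlinarith
  have hAle : Real.exp μ ≤ Real.exp (2 * μ * M) := by
    apply Real.exp_le_exp.mpr; nlinarith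
  set B : ℝ := Real.exp (2 * μ * M) - Real.exp μ with hBdef
  have hB0 : 0 ≤ B := by simp [hBdef]; linarith
  refine ⟨2 * B + 1, by linarith, ?_⟩
  intro T hT lam hlam hTlam t ht
  obtain ⟨ht0, htT⟩ := ht
  set A : ℝ := Real.exp μ - Real.exp (2 * μ * M) with hAdef
  have hAB : A = -B := by simp [hAdef, hBdef]
  have hgpos : 0 < t * (T - t) := mul_pos ht0 (by linarith)
  set g : ℝ := t * (T - t) with hgdef
  have hgne : g ≠ 0 := ne_of_gt hgpos
  set θ : ℝ := Real.exp (lam * (A / g)) with hθdef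
  have hθpos : 0 < θ := Real.exp_pos _
  -- derivative of s ↦ s*(T-s)
  have hgd : HasDerivAt (fun s : ℝ => s * (T - s)) (T - 2 * t) t := by
    have h := (hasDerivAt_id t).mul ((hasDerivAt_const t T).sub (hasDerivAt_id t))
    refine h.congr_deriv ?_
    simp; ring
  have hqd : HasDerivAt (fun s : ℝ => A / (s * (T - s)))
      (-(A * (T - 2 * t)) / g ^ 2) t := by
    have h := (hasDerivAt_const t A).div hgd hgne
    refine h.congr_deriv ?_
    rw [hgdef]; ring
  have hexpd : HasDerivAt (fun s : ℝ => Real.exp (lam * (A / (s * (T - s)))))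
      (θ * (lam * (-(A * (T - 2 * t)) / g ^ 2))) t :=
    (hqd.const_mul lam).exp
  have hφd : HasDerivAt (fun s : ℝ => Real.exp μ / (s * (T - s)))
      (-(Real.exp μ * (T - 2 * t)) / g ^ 2) t := by
    have h := (hasDerivAt_const t (Real.exp μ)).div hgd hgne
    refine h.congr_deriv ?_
    rw [hgdef]; ring
  have hFd : HasDerivAt (fun s : ℝ =>
      (Real.exp (lam * (A / (s * (T - s))))) ^ 2 * (Real.exp μ / (s * (T - s))))
      (θ ^ 2 * Real.exp μ * (-(T - 2 * t)) * (2 * lam * A + g) / g ^ 3) t := by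
    have h := (hexpd.pow 2).mul hφd
    refine h.congr_deriv ?_
    simp only [hθdef, hgdef, Pi.pow_apply]
    field_simp
    ring
  rw [hFd.deriv]
  have habs : |θ ^ 2 * Real.exp μ * (-(T - 2 * t)) * (2 * lam * A + g) / g ^ 3|
      = θ ^ 2 * Real.exp μ * |T - 2 * t| * |2 * lam * A + g| / g ^ 3 := by
    rw [abs_div, abs_mul, abs_mul, abs_mul]
    rw [abs_of_pos (pow_pos hθpos 2), abs_of_pos (Real.exp_pos μ),
      abs_of_pos (pow_pos hgpos 3), abs_neg]
  rw [habs]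
  have h1 : |T - 2 * t| ≤ T := by
    rw [abs_le]; constructor <;> linarith
  have hgleT : g ≤ lam := by
    have : g ≤ T ^ 2 := by rw [hgdef]; nlinarith
    linarith
  have h2 : |2 * lam * A + g| ≤ lam * (2 * B + 1) := by
    rw [hAB, abs_le]
    constructor <;> nlinarith
  have hexp3 : Real.exp μ ≤ (Real.exp μ) ^ 3 := by
    have h := Real.exp_pos μ
    have h1' : 1 ≤ Real.exp μ := by
      have := Real.add_one_le_exp μ; linarith
    nlinarith [mul_le_mul h1' h1' zero_le_one h.le]
  have hrhs : (2 * B + 1) * T * lam * θ ^ 2 * (Real.exp μ / g) ^ 3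
      = (2 * B + 1) * T * lam * θ ^ 2 * (Real.exp μ) ^ 3 / g ^ 3 := by
    rw [div_pow]; ring
  rw [hrhs]
  gcongr ?_ / g ^ 3
  calc θ ^ 2 * Real.exp μ * |T - 2 * t| * |2 * lam * A + g|
      ≤ θ ^ 2 * Real.exp μ * T * (lam * (2 * B + 1)) := by
        gcongr
    _ ≤ θ ^ 2 * (Real.exp μ) ^ 3 * T * (lam * (2 * B + 1)) := by
        gcongr
    _ = (2 * B + 1) * T * lam * θ ^ 2 * (Real.exp μ) ^ 3 := by ring
end

section
/- Let T>0, μ≥1, M≥1, λ>0 and α, φ, θ as before (spatially constant case). If λ ≥ T², then |d/dt (θ(t)^{-2} φ(t)^{-2})| ≤ C T λ θ(t)^{-2} for all t ∈ (0,T), where C depends only on μ and M. -/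
theorem stmt_6 (μ M : ℝ) (hμ : 1 ≤ μ) (hM : 1 ≤ M) :
    ∃ C > (0:ℝ), ∀ T > (0:ℝ), ∀ lam > (0:ℝ), T ^ 2 ≤ lam →
      ∀ t ∈ Set.Ioo (0:ℝ) T,
        |deriv (fun s : ℝ =>
            ((Real.exp (lam * ((Real.exp μ - Real.exp (2 * μ * M)) / (s * (T - s))))) ^ 2)⁻¹ *
              ((Real.exp μ / (s * (T - s))) ^ 2)⁻¹) t|
          ≤ C * T * lam *
              ((Real.exp (lam * ((Real.exp μ - Real.exp (2 * μ * M)) / (t * (T - t))))) ^ 2)⁻¹ := by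
  set a := Real.exp μ - Real.exp (2 * μ * M) with ha
  refine ⟨2 * Real.exp (2 * μ * M) + 1, by positivity, ?_⟩
  intro T hT lam hlam hTlam t ht
  obtain ⟨ht0, htT⟩ := ht
  have hTt : 0 < T - t := by linarith
  have hg : 0 < t * (T - t) := mul_pos ht0 hTt
  have hinv : ∀ x : ℝ, ((Real.exp x) ^ 2)⁻¹ = Real.exp (-(2 * x)) := by
    intro x
    have h2 : Real.exp x ^ 2 = Real.exp (2 * x) := by rw [two_mul, Real.exp_add, sq]
    rw [h2, ← Real.exp_neg]
  have hfun : (fun s : ℝ =>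
      ((Real.exp (lam * (a / (s * (T - s))))) ^ 2)⁻¹ *
        ((Real.exp μ / (s * (T - s))) ^ 2)⁻¹)
      = fun s : ℝ => Real.exp (-(2 * lam) * (a / (s * (T - s)))) *
          ((s * (T - s)) ^ 2 * Real.exp (-(2 * μ))) := by
    funext s
    rw [hinv, div_pow, inv_div,
      div_eq_mul_inv ((s * (T - s)) ^ 2) (Real.exp μ ^ 2), hinv]
    ring_nf
  have hg' : HasDerivAt (fun s : ℝ => s * (T - s)) (T - 2 * t) t := by
    have h1 := (hasDerivAt_id t).mul ((hasDerivAt_const t T).sub (hasDerivAt_id t))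
    exact h1.congr_deriv (by simp only [Pi.sub_apply, id_eq]; ring)
  have hu : HasDerivAt (fun s : ℝ => a / (s * (T - s)))
      ((0 * (t * (T - t)) - a * (T - 2 * t)) / (t * (T - t)) ^ 2) t :=
    (hasDerivAt_const t a).div hg' hg.ne'
  have hE : HasDerivAt (fun s : ℝ => Real.exp (-(2 * lam) * (a / (s * (T - s)))))
      (Real.exp (-(2 * lam) * (a / (t * (T - t)))) *
        (-(2 * lam) * ((0 * (t * (T - t)) - a * (T - 2 * t)) / (t * (T - t)) ^ 2))) t :=
    (hu.const_mul (-(2 * lam))).exp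
  have hP : HasDerivAt (fun s : ℝ => (s * (T - s)) ^ 2 * Real.exp (-(2 * μ)))
      ((2 * (t * (T - t)) * (T - 2 * t)) * Real.exp (-(2 * μ))) t := by
    have h2 := (hg'.pow 2).mul_const (Real.exp (-(2 * μ)))
    exact h2.congr_deriv (by push_cast; ring)
  have hD := hE.mul hP
  rw [hfun, (by exact hD : HasDerivAt (fun s : ℝ => Real.exp (-(2 * lam) * (a / (s * (T - s)))) * ((s * (T - s)) ^ 2 * Real.exp (-(2 * μ)))) _ t).deriv, hinv]
  set P := Real.exp (-(2 * lam) * (a / (t * (T - t)))) with hPdef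
  have hPP : Real.exp (-(2 * (lam * (a / (t * (T - t)))))) = P := by
    rw [hPdef]; ring_nf
  rw [hPP]
  have hPpos : 0 < P := hPdef ▸ Real.exp_pos _
  have hclean : P * (-(2 * lam) * ((0 * (t * (T - t)) - a * (T - 2 * t)) / (t * (T - t)) ^ 2)) *
        ((t * (T - t)) ^ 2 * Real.exp (-(2 * μ))) +
      P * (2 * (t * (T - t)) * (T - 2 * t) * Real.exp (-(2 * μ)))
      = P * Real.exp (-(2 * μ)) * ((T - 2 * t) * (2 * lam * a + 2 * (t * (T - t)))) := by
    field_simp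
    ring
  rw [hclean]
  have he : Real.exp μ ≤ Real.exp (2 * μ * M) := Real.exp_le_exp.2 (by nlinarith)
  have hgle : t * (T - t) ≤ lam / 4 := by nlinarith [sq_nonneg (T - 2 * t)]
  have hb1 : |T - 2 * t| ≤ T := abs_le.2 ⟨by linarith, by linarith⟩
  have hb2 : |2 * lam * a + 2 * (t * (T - t))| ≤ lam * (2 * Real.exp (2 * μ * M) + 1) := by
    rw [abs_le, ha]
    constructor <;> nlinarith [Real.exp_pos μ, Real.exp_pos (2 * μ * M)]
  have hXabs : |(T - 2 * t) * (2 * lam * a + 2 * (t * (T - t)))|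
      ≤ T * (lam * (2 * Real.exp (2 * μ * M) + 1)) := by
    rw [abs_mul]
    exact mul_le_mul hb1 hb2 (abs_nonneg _) (by linarith)
  have hex1 : Real.exp (-(2 * μ)) ≤ 1 := by
    rw [show (1:ℝ) = Real.exp 0 by rw [Real.exp_zero]]
    exact Real.exp_le_exp.2 (by linarith)
  calc |P * Real.exp (-(2 * μ)) * ((T - 2 * t) * (2 * lam * a + 2 * (t * (T - t))))|
      = P * Real.exp (-(2 * μ)) * |(T - 2 * t) * (2 * lam * a + 2 * (t * (T - t)))| := by
        rw [abs_mul, abs_mul, abs_of_pos hPpos, abs_of_pos (Real.exp_pos _)]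
    _ ≤ P * 1 * (T * (lam * (2 * Real.exp (2 * μ * M) + 1))) := by
        gcongr
    _ = (2 * Real.exp (2 * μ * M) + 1) * T * lam * P := by ring
end

section
/- (Strictly convex coercive functionals have unique minimizers.) Let H be a real Hilbert space and J : H → ℝ a continuous, strictly convex function that is coercive (J(u) → ∞ as ‖u‖ → ∞). Then J attains its infimum at a unique point of H. -/
open Set Metric

/-- The natural map from a Hilbert space to its weak dual. -/
noncomputable def stmt15Psi (H : Type*) [NormedAddCommGroup H] [InnerProductSpace ℝ H]
    [CompleteSpace H] : H → WeakDual ℝ H :=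
  fun u => StrongDual.toWeakDual (InnerProductSpace.toDual ℝ H u)

lemma stmt15Psi_injective {H : Type*} [NormedAddCommGroup H] [InnerProductSpace ℝ H]
    [CompleteSpace H] : Function.Injective (stmt15Psi H) := by
  intro a b hab
  have := StrongDual.toWeakDual.injective hab
  exact (InnerProductSpace.toDual ℝ H).injective this

lemma stmt15Psi_apply {H : Type*} [NormedAddCommGroup H] [InnerProductSpace ℝ H]
    [CompleteSpace H] (u y : H) : (stmt15Psi H u) y = inner ℝ u y := by
  rfl

/-- Mazur-type lemma: the image under `stmt15Psi` of a closed convex set is weakly closed. -/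
lemma stmt15_isClosed_image {H : Type*} [NormedAddCommGroup H] [InnerProductSpace ℝ H]
    [CompleteSpace H] {s : Set H} (hconv : Convex ℝ s) (hcl : IsClosed s) :
    IsClosed (stmt15Psi H '' s) := by
  rw [← isOpen_compl_iff]
  rw [isOpen_iff_forall_mem_open]
  intro f hf
  set x : H := (InnerProductSpace.toDual ℝ H).symm (WeakDual.toStrongDual f) with hx
  have hxs : x ∉ s := by
    intro hxmem
    apply hf
    refine ⟨x, hxmem, ?_⟩
    simp only [stmt15Psi, hx, LinearIsometryEquiv.apply_symm_apply]
    rfl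
  obtain ⟨ℓ, c, hsep, hxc⟩ := geometric_hahn_banach_closed_point hconv hcl hxs
  set x₀ : H := (InnerProductSpace.toDual ℝ H).symm ℓ with hx₀
  have key : ∀ y : H, ℓ y = inner ℝ x₀ y := by
    intro y
    rw [hx₀, ← InnerProductSpace.toDual_apply_apply, LinearIsometryEquiv.apply_symm_apply]
  refine ⟨{g : WeakDual ℝ H | c < g x₀}, ?_, ?_, ?_⟩
  · intro g hg
    rintro ⟨u, hus, rfl⟩
    have h1 : (stmt15Psi H u) x₀ = inner ℝ u x₀ := stmt15Psi_apply u x₀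
    have h2 : ℓ u < c := hsep u hus
    rw [key u, real_inner_comm] at h2
    simp only [mem_setOf_eq, h1] at hg
    linarith
  · exact isOpen_Ioi.preimage (WeakDual.eval_continuous x₀)
  · have hfx : f x₀ = ℓ x := by
      have h1 : f x₀ = (WeakDual.toStrongDual f) x₀ := rfl
      have h2 : (WeakDual.toStrongDual f) = InnerProductSpace.toDual ℝ H x := by
        rw [hx, LinearIsometryEquiv.apply_symm_apply]
      rw [h1, h2, InnerProductSpace.toDual_apply_apply, key x, real_inner_comm]
    simpa [mem_setOf_eq, hfx] using hxc

theorem stmt_15 {H : Type*} [NormedAddCommGroup H] [InnerProductSpace ℝ H] [CompleteSpace H]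
    (J : H → ℝ) (hc : Continuous J) (hsc : StrictConvexOn ℝ Set.univ J)
    (hcoer : ∀ M : ℝ, ∃ R : ℝ, ∀ u : H, R < ‖u‖ → M < J u) :
    ∃! u : H, ∀ v : H, J u ≤ J v := by
  classical
  obtain ⟨R, hR⟩ := hcoer (J 0)
  set r : ℝ := max R 1 with hr
  have hr0 : (0 : ℝ) ≤ r := le_trans zero_le_one (le_max_right _ _)
  have houtside : ∀ u : H, r < ‖u‖ → J 0 < J u := fun u hu =>
    hR u (lt_of_le_of_lt (le_max_left _ _) hu)
  set ψ : H → WeakDual ℝ H := stmt15Psi H with hψ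
  -- the compact ball in the weak dual
  have hψball : ∀ t : ℝ, 0 ≤ t →
      ψ '' closedBall 0 t = WeakDual.toStrongDual ⁻¹' closedBall 0 t := by
    intro t ht
    ext g
    constructor
    · rintro ⟨u, hu, rfl⟩
      simp only [mem_preimage, mem_closedBall, dist_zero_right] at hu ⊢
      have : ‖WeakDual.toStrongDual (ψ u)‖ = ‖u‖ := by
        simp only [hψ, stmt15Psi]
        exact (InnerProductSpace.toDual ℝ H).norm_map u
      rw [this]; exact hu
    · intro hg
      refine ⟨(InnerProductSpace.toDual ℝ H).symm (WeakDual.toStrongDual g), ?_, ?_⟩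
      · simp only [mem_preimage, mem_closedBall, dist_zero_right] at hg ⊢
        rwa [(InnerProductSpace.toDual ℝ H).symm.norm_map]
      · simp only [hψ, stmt15Psi, LinearIsometryEquiv.apply_symm_apply]
        rfl
  -- the family of sets
  set S : H → Set H := fun v => closedBall (0 : H) r ∩ {u : H | J u ≤ J v} with hS
  set A : H → Set (WeakDual ℝ H) := fun v => ψ '' S v with hA
  have hSconv : ∀ v, Convex ℝ (S v) := by
    intro v
    apply (convex_closedBall _ _).inter
    have := (hsc.convexOn).convex_le (J v)
    simpa using this
  have hSclosed : ∀ v, IsClosed (S v) := fun v =>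
    isClosed_closedBall.inter (isClosed_le hc continuous_const)
  have hAclosed : ∀ v, IsClosed (A v) := fun v =>
    stmt15_isClosed_image (hSconv v) (hSclosed v)
  have hAcompact : ∀ v, IsCompact (A v) := by
    intro v
    apply IsCompact.of_isClosed_subset (WeakDual.isCompact_closedBall (0 : StrongDual ℝ H) r)
      (hAclosed v)
    rw [← hψball r hr0]
    exact Set.image_mono (Set.inter_subset_left)
  have hSnonempty : ∀ v, (S v).Nonempty := by
    intro v
    by_cases hv : ‖v‖ ≤ r
    · exact ⟨v, by simpa [hS, mem_closedBall, dist_zero_right] using hv, by exact le_refl (J v)⟩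
    · push_neg at hv
      refine ⟨0, ?_, ?_⟩
      · simp [mem_closedBall, dist_zero_right, hr0]
      · exact le_of_lt (houtside v hv)
  have hAnonempty : ∀ v, (A v).Nonempty := fun v => ((hSnonempty v).image ψ)
  have hAdirected : Directed (· ⊇ ·) A := by
    intro v w
    rcases le_total (J v) (J w) with h | h
    · exact ⟨v, subset_refl _, Set.image_mono fun u hu => ⟨hu.1, le_trans hu.2 h⟩⟩
    · exact ⟨w, Set.image_mono fun u hu => ⟨hu.1, le_trans hu.2 h⟩, subset_refl _⟩
  obtain ⟨f, hf⟩ := IsCompact.nonempty_iInter_of_directed_nonempty_isCompact_isClosed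
    A hAdirected hAnonempty hAcompact hAclosed
  simp only [Set.mem_iInter] at hf
  -- extract the minimizer
  obtain ⟨u₀, hu₀S, hu₀f⟩ := hf 0
  have hmin : ∀ v : H, J u₀ ≤ J v := by
    intro v
    obtain ⟨u', hu'S, hu'f⟩ := hf v
    have : u' = u₀ := stmt15Psi_injective (hu'f.trans hu₀f.symm)
    rw [← this]
    exact hu'S.2
  refine ⟨u₀, hmin, ?_⟩
  intro w hw
  by_contra hne
  have hlt := hsc.2 (Set.mem_univ w) (Set.mem_univ u₀) hne
    (by norm_num : (0:ℝ) < 1/2) (by norm_num : (0:ℝ) < 1/2) (by norm_num)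
  have h1 : J w = J u₀ := le_antisymm (hw u₀) (hmin w)
  have h2 : J u₀ ≤ J ((1/2 : ℝ) • w + (1/2 : ℝ) • u₀) := hmin _
  simp only [smul_eq_mul] at hlt
  rw [h1] at hlt
  have : (1/2 : ℝ) * J u₀ + (1/2 : ℝ) * J u₀ = J u₀ := by ring
  rw [this] at hlt
  linarith
end
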